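/- For any hypermap M, the inequality 2·c ≥ χ holds, where c is the number of connected components and χ = v + e + f - d is the Euler characteristic. -/

import Mathlib

open Equiv

/-- The setoid on darts given by the cycle (orbit) relation of a permutation. -/
def cycleSetoid {D : Type*} (f : Perm D) : Setoid D :=
  ⟨f.SameCycle, ⟨fun x => Perm.SameCycle.refl f x, Perm.SameCycle.symm, Perm.SameCycle.trans⟩⟩

/-- Number of orbits (cycles) of a permutation. -/
noncomputable def numCycles {D : Type*} (f : Perm D) : ℕ :=
  Nat.card (Quotient (cycleSetoid f))

/-- The face permutation φ = α₁⁻¹ ∘ α₀⁻¹. -/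
def facePerm {D : Type*} (a0 a1 : Perm D) : Perm D := (a0⁻¹).trans (a1⁻¹)

/-- Number of connected components: orbits of the subgroup generated by α₀ and α₁. -/
noncomputable def numComponents {D : Type*} (a0 a1 : Perm D) : ℕ :=
  Nat.card (MulAction.orbitRel.Quotient (Subgroup.closure {a0, a1}) D)

/-- Euler characteristic χ = v + e + f - d. -/
noncomputable def eulerChar (D : Type*) [Fintype D] (a0 a1 : Perm D) : ℤ :=
  (numCycles a1 : ℤ) + numCycles a0 + numCycles (facePerm a0 a1) - Fintype.card D


/-- Genus g = c - χ/2 (integer division). -/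
noncomputable def genusZ (D : Type*) [Fintype D] (a0 a1 : Perm D) : ℤ :=
  (numComponents a0 a1 : ℤ) - eulerChar D a0 a1 / 2

/-- Planarity: genus zero. -/
def PlanarH (D : Type*) [Fintype D] (a0 a1 : Perm D) : Prop := genusZ D a0 a1 = 0

/-! ### Auxiliary machinery -/

section Aux

set_option linter.unusedSectionVars false
set_option linter.unusedVariables false

variable {D : Type*} [Fintype D]

/-- Orbit count of a subgroup of permutations acting on `D`. -/
noncomputable def oc (G : Subgroup (Perm D)) : ℕ :=
  Nat.card (Quotient (MulAction.orbitRel G D))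

lemma orel_iff {G : Subgroup (Perm D)} {a b : D} :
    MulAction.orbitRel G D a b ↔ ∃ g ∈ G, g b = a := by
  rw [MulAction.orbitRel_apply, MulAction.mem_orbit_iff]
  constructor
  · rintro ⟨⟨g, hg⟩, h⟩; exact ⟨g, hg, h⟩
  · rintro ⟨g, hg, h⟩; exact ⟨⟨g, hg⟩, h⟩

lemma orel_of_mem {G : Subgroup (Perm D)} {g : Perm D} (hg : g ∈ G) (z : D) :
    MulAction.orbitRel G D (g z) z := orel_iff.mpr ⟨g, hg, rfl⟩

lemma oc_mono {G H : Subgroup (Perm D)} (h : G ≤ H) : oc H ≤ oc G := by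
  apply Nat.card_le_card_of_surjective
    (Quot.map id (fun a b hab => ?_) : Quotient (MulAction.orbitRel G D) → _)
  · intro q; obtain ⟨a, rfl⟩ := q.exists_rep; exact ⟨Quotient.mk _ a, rfl⟩
  · obtain ⟨g, hg, rfl⟩ := orel_iff.mp hab
    exact orel_iff.mpr ⟨g, h hg, rfl⟩

lemma closure_orel {S : Set (Perm D)} {G : Subgroup (Perm D)}
    (hS : ∀ s ∈ S, ∀ z, MulAction.orbitRel G D (s z) z) :
    ∀ h ∈ Subgroup.closure S, ∀ z, MulAction.orbitRel G D (h z) z := by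
  intro h hh
  induction hh using Subgroup.closure_induction with
  | mem s hs => exact hS s hs
  | one => intro z; exact (MulAction.orbitRel G D).refl z
  | mul a b ha hb pa pb =>
      intro z
      exact (MulAction.orbitRel G D).trans (pa (b z)) (pb z)
  | inv a ha pa =>
      intro z
      have := pa (a⁻¹ z)
      rw [show a (a⁻¹ z) = z from a.apply_symm_apply z] at this
      exact (MulAction.orbitRel G D).symm this

lemma oc_closure_eq {S : Set (Perm D)} {G : Subgroup (Perm D)} (hGS : G ≤ Subgroup.closure S)
    (hS : ∀ s ∈ S, ∀ z, MulAction.orbitRel G D (s z) z) :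
    oc (Subgroup.closure S) = oc G := by
  unfold oc
  congr 1
  apply congrArg Quotient (Setoid.ext fun a b => ?_)
  constructor
  · rintro h
    obtain ⟨g, hg, rfl⟩ := orel_iff.mp h
    exact closure_orel hS g hg b
  · rintro h
    obtain ⟨g, hg, rfl⟩ := orel_iff.mp h
    exact orel_of_mem (hGS hg) b

/-- The coarsening relation used in `count_le`. -/
def orelR (G : Subgroup (Perm D)) (x y a b : D) : Prop :=
  MulAction.orbitRel G D a b ∨
    ((MulAction.orbitRel G D a x ∨ MulAction.orbitRel G D a y) ∧
     (MulAction.orbitRel G D b x ∨ MulAction.orbitRel G D b y))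

lemma closure_R {S : Set (Perm D)} {G : Subgroup (Perm D)} {x y : D}
    (hS : ∀ s ∈ S, ∀ z, orelR G x y (s z) z) :
    ∀ h ∈ Subgroup.closure S, ∀ z, orelR G x y (h z) z := by
  set rG := MulAction.orbitRel G D
  have hsymm : ∀ {a b}, orelR G x y a b → orelR G x y b a := by
    rintro a b (h | ⟨h1, h2⟩)
    · exact Or.inl (rG.symm h)
    · exact Or.inr ⟨h2, h1⟩
  have htrans : ∀ {a b c}, orelR G x y a b → orelR G x y b c → orelR G x y a c := by
    rintro a b c (h | ⟨h1, h2⟩) (h' | ⟨h1', h2'⟩)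
    · exact Or.inl (rG.trans h h')
    · exact Or.inr ⟨h1'.imp (rG.trans h) (rG.trans h), h2'⟩
    · exact Or.inr ⟨h1, h2.imp (fun hh => rG.trans (rG.symm h') hh)
        (fun hh => rG.trans (rG.symm h') hh)⟩
    · exact Or.inr ⟨h1, h2'⟩
  intro h hh
  induction hh using Subgroup.closure_induction with
  | mem s hs => exact hS s hs
  | one => intro z; exact Or.inl (rG.refl z)
  | mul a b ha hb pa pb =>
      intro z
      exact htrans (pa (b z)) (pb z)
  | inv a ha pa =>
      intro z
      have := pa (a⁻¹ z)
      rw [show a (a⁻¹ z) = z from a.apply_symm_apply z] at this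
      exact hsymm this

/-- Merging at most the classes of `x` and `y` loses at most one orbit. -/
lemma count_le {G H : Subgroup (Perm D)} {x y : D} (hGH : G ≤ H)
    (hP : ∀ h ∈ H, ∀ z, orelR G x y (h z) z) :
    oc G ≤ oc H + 1 := by
  classical
  set rG := MulAction.orbitRel G D
  set rH := MulAction.orbitRel H D
  have hGHrel : ∀ {a b : D}, rG a b → rH a b := by
    intro a b h
    obtain ⟨g, hg, rfl⟩ := orel_iff.mp h
    exact orel_iff.mpr ⟨g, hGH hg, rfl⟩
  have key : ∃ f : Quotient rG → Quotient rH ⊕ Unit, Function.Injective f := by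
    refine ⟨Quotient.lift (fun z => if rG z x then Sum.inr () else Sum.inl (Quotient.mk rH z))
      ?_, ?_⟩
    · intro a b hab
      have hab' : rG a b := hab
      have hbx : rG b x ↔ rG a x :=
        ⟨fun hb => rG.trans hab' hb, fun ha => rG.trans (rG.symm hab') ha⟩
      by_cases h : rG a x
      · rw [if_pos h, if_pos (hbx.mpr h)]
      · rw [if_neg h, if_neg (fun hb => h (hbx.mp hb))]
        exact congrArg _ (Quotient.sound (hGHrel hab))
    · intro q1 q2
      induction q1 using Quotient.inductionOn
      induction q2 using Quotient.inductionOn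
      rename_i a b
      simp only [Quotient.lift_mk]
      by_cases ha : rG a x <;> by_cases hb : rG b x <;>
        simp only [if_pos, if_neg, ha, hb, ite_true, ite_false]
      · intro _; exact Quotient.sound (rG.trans ha (rG.symm hb))
      · intro h; exact absurd h (by simp)
      · intro h; exact absurd h (by simp)
      · intro h
        have hab : rH a b := Quotient.exact (by simpa using h)
        obtain ⟨g, hg, rfl⟩ := orel_iff.mp hab
        rcases hP g hg b with h1 | ⟨h2, h3⟩
        · exact Quotient.sound h1
        · rcases h2 with h2 | h2
          · exact absurd h2 ha
          · rcases h3 with h3 | h3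
            · exact absurd h3 hb
            · exact Quotient.sound (rG.trans h2 (rG.symm h3))
  obtain ⟨f, hf⟩ := key
  calc oc G ≤ Nat.card (Quotient rH ⊕ Unit) := Nat.card_le_card_of_injective f hf
    _ = oc H + 1 := by rw [Nat.card_sum]; simp [oc]; convert rfl

/-- If `x, y` are `H`-equivalent but not `G`-equivalent, `G` has strictly more orbits. -/
lemma count_lt {G H : Subgroup (Perm D)} {x y : D} (hGH : G ≤ H)
    (hxyH : MulAction.orbitRel H D x y) (hxyG : ¬ MulAction.orbitRel G D x y) :
    oc H + 1 ≤ oc G := by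
  classical
  set rG := MulAction.orbitRel G D
  set rH := MulAction.orbitRel H D
  have hGHrel : ∀ {a b : D}, rG a b → rH a b := by
    intro a b h
    obtain ⟨g, hg, rfl⟩ := orel_iff.mp h
    exact orel_iff.mpr ⟨g, hGH hg, rfl⟩
  have key : ∃ f : Quotient rH ⊕ Unit → Quotient rG, Function.Injective f := by
    refine ⟨fun q => match q with
      | Sum.inr () => Quotient.mk rG y
      | Sum.inl q => if q = Quotient.mk rH x then Quotient.mk rG x
          else Quotient.mk rG q.out, ?_⟩
    intro q1 q2 h
    match q1, q2 with
    | Sum.inr (), Sum.inr () => rfl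
    | Sum.inl q1, Sum.inl q2 =>
        by_cases h1 : q1 = Quotient.mk rH x <;> by_cases h2 : q2 = Quotient.mk rH x <;>
          simp only [h1, h2, if_pos, if_neg, ite_true, ite_false] at h
        · rw [h1, h2]
        · exfalso
          have : rG x q2.out := Quotient.exact h
          exact h2 (by rw [← Quotient.out_eq q2]; exact (Quotient.sound (rH.symm (hGHrel this))))
        · exfalso
          have : rG q1.out x := Quotient.exact h
          exact h1 (by rw [← Quotient.out_eq q1]; exact (Quotient.sound (hGHrel this)))
        · have : rG q1.out q2.out := Quotient.exact h
          rw [← Quotient.out_eq q1, ← Quotient.out_eq q2]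
          exact congrArg _ (Quotient.sound (hGHrel this))
    | Sum.inl q1, Sum.inr () =>
        exfalso
        by_cases h1 : q1 = Quotient.mk rH x <;>
          simp only [h1, if_pos, if_neg, ite_true, ite_false] at h
        · exact hxyG (Quotient.exact h)
        · have : rG q1.out y := Quotient.exact h
          exact h1 (by rw [← Quotient.out_eq q1]
                       exact Quotient.sound (rH.trans (hGHrel this) (rH.symm hxyH)))
    | Sum.inr (), Sum.inl q1 =>
        exfalso
        by_cases h1 : q1 = Quotient.mk rH x <;>
          simp only [h1, if_pos, if_neg, ite_true, ite_false] at h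
        · exact hxyG (rG.symm (Quotient.exact h))
        · have : rG y q1.out := Quotient.exact h
          exact h1 (by rw [← Quotient.out_eq q1]
                       exact Quotient.sound (rH.symm (rH.trans (hxyH) (hGHrel this))))
  obtain ⟨f, hf⟩ := key
  calc oc H + 1 = Nat.card (Quotient rH ⊕ Unit) := by rw [Nat.card_sum]; simp [oc]; convert rfl
    _ ≤ oc G := Nat.card_le_card_of_injective f hf

lemma orel_zpowers_iff {f : Perm D} {a b : D} :
    MulAction.orbitRel (Subgroup.zpowers f) D a b ↔ f.SameCycle a b := by
  rw [orel_iff]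
  constructor
  · rintro ⟨g, hg, rfl⟩
    obtain ⟨i, rfl⟩ := Subgroup.mem_zpowers_iff.mp hg
    exact Perm.SameCycle.symm ⟨i, rfl⟩
  · rintro ⟨i, rfl⟩
    exact ⟨f ^ (-i), Subgroup.mem_zpowers_iff.mpr ⟨-i, rfl⟩, by
      simp [← Perm.mul_apply, ← zpow_add]⟩

lemma numCycles_eq_oc (f : Perm D) : numCycles f = oc (Subgroup.zpowers f) := by
  unfold numCycles oc
  congr 1
  apply congrArg Quotient (Setoid.ext fun a b => ?_)
  exact orel_zpowers_iff.symm

lemma numCycles_conj (σ f : Perm D) : numCycles (σ * f * σ⁻¹) = numCycles f := by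
  unfold numCycles
  apply Nat.card_congr
  exact (Quotient.congr σ (fun a b => by
    constructor
    · intro h; exact Perm.SameCycle.conj h
    · intro h
      have := Perm.sameCycle_conj.mp h
      exact (by simpa using this : f.SameCycle a b))).symm

end Aux


section Aux2

set_option linter.unusedSectionVars false
set_option linter.unusedVariables false

variable {D : Type*} [Fintype D] [DecidableEq D]

lemma merge_sc {f : Perm D} {x y : D} (hxy : x ≠ y) (h : ¬ f.SameCycle x y) :
    (swap x y * f).SameCycle x y := by
  have hex : ∃ n, 0 < n ∧ (f ^ n) x = x :=
    ⟨orderOf f, orderOf_pos f, by rw [pow_orderOf_eq_one]; rfl⟩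
  obtain ⟨hmpos, hmx⟩ := Nat.find_spec hex
  have key : ∀ i < Nat.find hex, ((swap x y * f) ^ i) x = (f ^ i) x := by
    intro i hi
    induction i with
    | zero => simp
    | succ i ih =>
      have hi' : i < Nat.find hex := Nat.lt_of_succ_lt hi
      have h1 : ((swap x y * f) ^ (i+1)) x = swap x y ((f ^ (i+1)) x) := by
        rw [pow_succ', pow_succ']
        simp only [Perm.mul_apply, ih hi']
      have hne1 : (f ^ (i+1)) x ≠ x := fun hc =>
        Nat.find_min hex hi ⟨Nat.succ_pos i, hc⟩
      have hne2 : (f ^ (i+1)) x ≠ y := fun hc =>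
        h ⟨((i:ℤ)+1), by rw [show ((i:ℤ)+1) = ((i+1 : ℕ) : ℤ) by push_cast; ring,
          zpow_natCast]; exact hc⟩
      rw [h1, swap_apply_of_ne_of_ne hne1 hne2]
  obtain ⟨k, hkm⟩ : ∃ k, Nat.find hex = k + 1 := ⟨Nat.find hex - 1, by omega⟩
  refine ⟨(Nat.find hex : ℤ), ?_⟩
  rw [zpow_natCast]
  have h2 : ((swap x y * f) ^ Nat.find hex) x = swap x y ((f ^ Nat.find hex) x) := by
    rw [hkm, pow_succ', pow_succ']
    simp only [Perm.mul_apply, key k (by omega)]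
  rw [h2, hmx, swap_apply_left]

lemma split_not_sc {f : Perm D} {x y : D} (hxy : x ≠ y) (h : f.SameCycle x y) :
    ¬ (swap x y * f).SameCycle x y := by
  obtain ⟨i0, hi0pos, _, hi0⟩ := h.exists_pow_eq''
  have hex : ∃ n, 0 < n ∧ (f ^ n) x = y := ⟨i0, hi0pos, hi0⟩
  obtain ⟨hkpos, hkx⟩ := Nat.find_spec hex
  have key : ∀ n : ℕ, ∃ i, i < Nat.find hex ∧ ((swap x y * f) ^ n) x = (f ^ i) x := by
    intro n
    induction n with
    | zero => exact ⟨0, hkpos, by simp⟩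
    | succ n ih =>
      obtain ⟨i, hik, hgn⟩ := ih
      have h1 : ((swap x y * f) ^ (n+1)) x = swap x y ((f ^ (i+1)) x) := by
        rw [pow_succ', pow_succ']
        simp only [Perm.mul_apply, hgn]
      by_cases hcy : (f ^ (i+1)) x = y
      · exact ⟨0, hkpos, by rw [h1, hcy, swap_apply_right]; simp⟩
      · have hcx : (f ^ (i+1)) x ≠ x := by
          intro hc
          rcases Nat.lt_or_ge (i+1) (Nat.find hex) with hlt | hge
          · have hyy : (f ^ (Nat.find hex - (i+1))) x = y := by
              have h2 : (f ^ ((Nat.find hex - (i+1)) + (i+1))) x = y := by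
                rw [show (Nat.find hex - (i+1)) + (i+1) = Nat.find hex by omega]; exact hkx
              rwa [pow_add, Perm.mul_apply, hc] at h2
            exact Nat.find_min hex (by omega) ⟨by omega, hyy⟩
          · have hik1 : i + 1 = Nat.find hex := by omega
            rw [hik1, hkx] at hc
            exact hxy hc.symm
        have hik1 : i + 1 < Nat.find hex := by
          rcases Nat.lt_or_ge (i+1) (Nat.find hex) with hlt | hge
          · exact hlt
          · exact absurd (by rw [show i+1 = Nat.find hex by omega]; exact hkx) hcy
        exact ⟨i+1, hik1, by rw [h1, swap_apply_of_ne_of_ne hcx hcy]⟩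
  intro hsc
  obtain ⟨n, hnpos, _, hn⟩ := hsc.exists_pow_eq''
  obtain ⟨i, hik, hgn⟩ := key n
  rw [hn] at hgn
  have hipos : 0 < i := by
    rcases Nat.eq_zero_or_pos i with rfl | hp
    · rw [pow_zero] at hgn; exact absurd hgn.symm hxy
    · exact hp
  exact Nat.find_min hex hik ⟨hipos, hgn.symm⟩

lemma split_count {f : Perm D} {x y : D} (hxy : x ≠ y) (h : f.SameCycle x y) :
    numCycles f + 1 ≤ numCycles (swap x y * f) := by
  have hfg : swap x y * (swap x y * f) = f := by
    rw [← mul_assoc, swap_mul_self, one_mul]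
  have hgH : swap x y * f ∈ Subgroup.closure ({swap x y * f, swap x y} : Set (Perm D)) :=
    Subgroup.subset_closure (by simp)
  have hτH : swap x y ∈ Subgroup.closure ({swap x y * f, swap x y} : Set (Perm D)) :=
    Subgroup.subset_closure (by simp)
  have hfH : f ∈ Subgroup.closure ({swap x y * f, swap x y} : Set (Perm D)) := by
    have hm := mul_mem hτH hgH
    rwa [hfg] at hm
  have h1 : Subgroup.zpowers f ≤ Subgroup.closure ({swap x y * f, swap x y} : Set (Perm D)) :=
    Subgroup.zpowers_le.mpr hfH
  have hτf : ∀ z, MulAction.orbitRel (Subgroup.zpowers f) D (swap x y z) z := by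
    intro z
    rcases eq_or_ne z x with hzx | hzx
    · rw [hzx, swap_apply_left]
      exact orel_zpowers_iff.mpr h.symm
    rcases eq_or_ne z y with hzy | hzy
    · rw [hzy, swap_apply_right]; exact orel_zpowers_iff.mpr h
    · rw [swap_apply_of_ne_of_ne hzx hzy]
  have h2 : oc (Subgroup.closure ({swap x y * f, swap x y} : Set (Perm D)))
      = oc (Subgroup.zpowers f) := by
    apply oc_closure_eq h1
    intro s hs z
    simp only [Set.mem_insert_iff, Set.mem_singleton_iff] at hs
    rcases hs with rfl | rfl
    · show MulAction.orbitRel (Subgroup.zpowers f) D (swap x y (f z)) z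
      exact (MulAction.orbitRel _ D).trans (hτf (f z))
        (orel_zpowers_iff.mpr (Perm.SameCycle.symm ⟨1, by simp⟩))
    · exact hτf z
  have h3 : MulAction.orbitRel (Subgroup.closure ({swap x y * f, swap x y} : Set (Perm D))) D x y :=
    orel_iff.mpr ⟨swap x y, hτH, swap_apply_right x y⟩
  have h4 : ¬ MulAction.orbitRel (Subgroup.zpowers (swap x y * f)) D x y := fun hc =>
    split_not_sc hxy h (orel_zpowers_iff.mp hc)
  have h5 := count_lt (Subgroup.zpowers_le.mpr hgH) h3 h4
  rw [numCycles_eq_oc, numCycles_eq_oc]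
  omega

lemma merge_count {x y : D} (hxy : x ≠ y) (g : Perm D) :
    numCycles (swap x y * g) ≤ numCycles g + 1 := by
  have hgg : swap x y * (swap x y * g) = g := by
    rw [← mul_assoc, swap_mul_self, one_mul]
  have hg'H : swap x y * g ∈ Subgroup.closure ({swap x y * g, swap x y} : Set (Perm D)) :=
    Subgroup.subset_closure (by simp)
  have hτH : swap x y ∈ Subgroup.closure ({swap x y * g, swap x y} : Set (Perm D)) :=
    Subgroup.subset_closure (by simp)
  have hgH : g ∈ Subgroup.closure ({swap x y * g, swap x y} : Set (Perm D)) := by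
    have hm := mul_mem hτH hg'H
    rwa [hgg] at hm
  have hGH : Subgroup.zpowers (swap x y * g)
      ≤ Subgroup.closure ({swap x y * g, swap x y} : Set (Perm D)) :=
    Subgroup.zpowers_le.mpr hg'H
  have hP : ∀ h ∈ Subgroup.closure ({swap x y * g, swap x y} : Set (Perm D)), ∀ z,
      orelR (Subgroup.zpowers (swap x y * g)) x y (h z) z := by
    apply closure_R
    intro s hs z
    simp only [Set.mem_insert_iff, Set.mem_singleton_iff] at hs
    rcases hs with hs | hs
    · rw [hs]; exact Or.inl (orel_of_mem (Subgroup.mem_zpowers _) z)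
    · rw [hs]
      rcases eq_or_ne z x with hzx | hzx
      · rw [hzx, swap_apply_left]
        exact Or.inr ⟨Or.inr ((MulAction.orbitRel _ D).refl y),
          Or.inl ((MulAction.orbitRel _ D).refl x)⟩
      rcases eq_or_ne z y with hzy | hzy
      · rw [hzy, swap_apply_right]
        exact Or.inr ⟨Or.inl ((MulAction.orbitRel _ D).refl x),
          Or.inr ((MulAction.orbitRel _ D).refl y)⟩
      · rw [swap_apply_of_ne_of_ne hzx hzy]
        exact Or.inl ((MulAction.orbitRel _ D).refl z)
  have h1 := count_le hGH hP
  have h2 : Subgroup.zpowers g ≤ Subgroup.closure ({swap x y * g, swap x y} : Set (Perm D)) :=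
    Subgroup.zpowers_le.mpr hgH
  have h3 := oc_mono h2
  rw [numCycles_eq_oc, numCycles_eq_oc]
  omega

lemma numCycles_one : numCycles (1 : Perm D) = Fintype.card D := by
  unfold numCycles
  have e : Quotient (cycleSetoid (1 : Perm D)) ≃ D :=
    { toFun := Quotient.lift id (fun a b h => Perm.sameCycle_one.mp h)
      invFun := Quotient.mk _
      left_inv := fun q => by
        induction q using Quotient.inductionOn
        rfl
      right_inv := fun a => rfl }
  rw [Nat.card_congr e, Nat.card_eq_fintype_card]

lemma numCycles_inv (f : Perm D) : numCycles f⁻¹ = numCycles f := by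
  unfold numCycles
  congr 1
  exact congrArg Quotient (Setoid.ext fun a b => Perm.sameCycle_inv)

lemma facePerm_mul (a0 a1 : Perm D) : facePerm a0 a1 = a1⁻¹ * a0⁻¹ := rfl

lemma numComponents_oc (a0 a1 : Perm D) :
    numComponents a0 a1 = oc (Subgroup.closure ({a0, a1} : Set (Perm D))) := rfl

lemma numComponents_one (a0 : Perm D) : numComponents a0 1 = numCycles a0 := by
  rw [numComponents_oc, numCycles_eq_oc]
  congr 1
  apply le_antisymm
  · rw [Subgroup.closure_le]
    intro s hs
    simp only [Set.mem_insert_iff, Set.mem_singleton_iff] at hs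
    rcases hs with rfl | rfl
    · exact Subgroup.mem_zpowers _
    · exact one_mem _
  · exact Subgroup.zpowers_le.mpr (Subgroup.subset_closure (by simp))

lemma base_ineq (a0 : Perm D) :
    eulerChar D a0 1 ≤ 2 * (numComponents a0 1 : ℤ) := by
  have hf : facePerm a0 1 = a0⁻¹ := by rw [facePerm_mul]; simp
  rw [eulerChar, hf, numCycles_inv, numCycles_one, numComponents_one]
  omega

lemma main_aux (n : ℕ) :
    ∀ a0 a1 : Perm D, a1.support.card ≤ n →
      eulerChar D a0 a1 ≤ 2 * (numComponents a0 a1 : ℤ) := by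
  induction n with
  | zero =>
    intro a0 a1 h
    have h1 : a1 = 1 := by
      rwa [Nat.le_zero, Finset.card_eq_zero, Perm.support_eq_empty_iff] at h
    subst h1
    exact base_ineq a0
  | succ n ih =>
    intro a0 a1 hcard
    by_cases h1 : a1 = 1
    · subst h1; exact base_ineq a0
    obtain ⟨x, hx⟩ : ∃ x, a1 x ≠ x := by
      by_contra hco; push_neg at hco
      exact h1 (Equiv.ext hco)
    obtain ⟨y, hy⟩ : ∃ y, a1 x = y := ⟨a1 x, rfl⟩
    have hxy : x ≠ y := fun hc => hx (by rw [hy, hc])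
    obtain ⟨a1', ha1'⟩ : ∃ p, a1 * swap x y = p := ⟨_, rfl⟩
    -- support decreases
    have hysupp : y ∈ a1.support := by
      rw [← hy]
      exact Perm.apply_mem_support.mpr (Perm.mem_support.mpr hx)
    have ha1'y : a1' y = y := by
      rw [← ha1', Perm.mul_apply, swap_apply_right, hy]
    have hsub : a1'.support ⊆ a1.support.erase y := by
      intro z hz
      rw [Finset.mem_erase, Perm.mem_support]
      have hz' : a1' z ≠ z := Perm.mem_support.mp hz
      have hzy : z ≠ y := fun hc => hz' (by rw [hc, ha1'y])
      refine ⟨hzy, ?_⟩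
      intro hzz
      apply hz'
      rcases eq_or_ne z x with rfl | hzx
      · exact absurd hzz hx
      · rw [← ha1', Perm.mul_apply, swap_apply_of_ne_of_ne hzx hzy, hzz]
    have hcard' : a1'.support.card ≤ n := by
      have h2 := Finset.card_le_card hsub
      rw [Finset.card_erase_of_mem hysupp] at h2
      have hpos : 1 ≤ a1.support.card := Finset.card_pos.mpr ⟨y, hysupp⟩
      omega
    have hIH := ih a0 a1' hcard'
    -- vertices
    have hv : numCycles a1 + 1 ≤ numCycles a1' := by
      have hconj : a1' = a1 * (swap x y * a1) * a1⁻¹ := by rw [← ha1']; group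
      rw [hconj, numCycles_conj]
      exact split_count hxy ⟨1, by rw [zpow_one]; exact hy⟩
    -- faces
    have hφ' : facePerm a0 a1' = swap x y * facePerm a0 a1 := by
      rw [facePerm_mul, facePerm_mul, ← ha1', mul_inv_rev, swap_inv, mul_assoc]
    -- groups
    have ha0H : a0 ∈ Subgroup.closure ({a0, a1, swap x y} : Set (Perm D)) :=
      Subgroup.subset_closure (by simp)
    have ha1H : a1 ∈ Subgroup.closure ({a0, a1, swap x y} : Set (Perm D)) :=
      Subgroup.subset_closure (by simp)
    have hτH : swap x y ∈ Subgroup.closure ({a0, a1, swap x y} : Set (Perm D)) :=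
      Subgroup.subset_closure (by simp)
    have ha0G : a0 ∈ Subgroup.closure ({a0, a1} : Set (Perm D)) :=
      Subgroup.subset_closure (by simp)
    have ha1G : a1 ∈ Subgroup.closure ({a0, a1} : Set (Perm D)) :=
      Subgroup.subset_closure (by simp)
    have ha0G' : a0 ∈ Subgroup.closure ({a0, a1'} : Set (Perm D)) :=
      Subgroup.subset_closure (by simp)
    have ha1'G' : a1' ∈ Subgroup.closure ({a0, a1'} : Set (Perm D)) :=
      Subgroup.subset_closure (by simp)
    have hGH : Subgroup.closure ({a0, a1} : Set (Perm D))
        ≤ Subgroup.closure ({a0, a1, swap x y} : Set (Perm D)) := by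
      rw [Subgroup.closure_le]
      intro s hs
      simp only [Set.mem_insert_iff, Set.mem_singleton_iff] at hs
      rcases hs with rfl | rfl
      · exact ha0H
      · exact ha1H
    have hG'H : Subgroup.closure ({a0, a1'} : Set (Perm D))
        ≤ Subgroup.closure ({a0, a1, swap x y} : Set (Perm D)) := by
      rw [Subgroup.closure_le]
      intro s hs
      simp only [Set.mem_insert_iff, Set.mem_singleton_iff] at hs
      rcases hs with rfl | rfl
      · exact ha0H
      · rw [← ha1']; exact mul_mem ha1H hτH
    have hxyG : MulAction.orbitRel (Subgroup.closure ({a0, a1} : Set (Perm D))) D x y := by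
      have h2 := orel_of_mem ha1G x
      rw [hy] at h2
      exact (MulAction.orbitRel _ D).symm h2
    have hτG : ∀ z, MulAction.orbitRel (Subgroup.closure ({a0, a1} : Set (Perm D))) D
        (swap x y z) z := by
      intro z
      rcases eq_or_ne z x with hzx | hzx
      · rw [hzx, swap_apply_left]; exact (MulAction.orbitRel _ D).symm hxyG
      rcases eq_or_ne z y with hzy | hzy
      · rw [hzy, swap_apply_right]; exact hxyG
      · rw [swap_apply_of_ne_of_ne hzx hzy]
    have hocH : oc (Subgroup.closure ({a0, a1, swap x y} : Set (Perm D)))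
        = oc (Subgroup.closure ({a0, a1} : Set (Perm D))) := by
      apply oc_closure_eq hGH
      intro s hs z
      simp only [Set.mem_insert_iff, Set.mem_singleton_iff] at hs
      rcases hs with hs | hs | hs
      · rw [hs]; exact orel_of_mem ha0G z
      · rw [hs]; exact orel_of_mem ha1G z
      · rw [hs]; exact hτG z
    have hcomp := numComponents_oc a0 a1
    have hcomp' := numComponents_oc a0 a1'
    by_cases hsc : (facePerm a0 a1).SameCycle x y
    · -- split case
      have hf : numCycles (facePerm a0 a1) + 1 ≤ numCycles (facePerm a0 a1') := by
        rw [hφ']; exact split_count hxy hsc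
      have hc : oc (Subgroup.closure ({a0, a1'} : Set (Perm D)))
          ≤ oc (Subgroup.closure ({a0, a1} : Set (Perm D))) + 1 := by
        rw [← hocH]
        apply count_le hG'H
        apply closure_R
        intro s hs z
        simp only [Set.mem_insert_iff, Set.mem_singleton_iff] at hs
        rcases hs with hs | hs | hs
        · rw [hs]; exact Or.inl (orel_of_mem ha0G' z)
        · rw [hs]
          rcases eq_or_ne z x with hzx | hzx
          · rw [hzx, hy]
            exact Or.inr ⟨Or.inr ((MulAction.orbitRel _ D).refl y),
              Or.inl ((MulAction.orbitRel _ D).refl x)⟩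
          rcases eq_or_ne z y with hzy | hzy
          · rw [hzy]
            have hay : a1 y = a1' x := by
              rw [← ha1', Perm.mul_apply, swap_apply_left]
            rw [hay]
            exact Or.inr ⟨Or.inl (orel_of_mem ha1'G' x),
              Or.inr ((MulAction.orbitRel _ D).refl y)⟩
          · have haz : a1 z = a1' z := by
              rw [← ha1', Perm.mul_apply, swap_apply_of_ne_of_ne hzx hzy]
            rw [haz]
            exact Or.inl (orel_of_mem ha1'G' z)
        · rw [hs]
          rcases eq_or_ne z x with hzx | hzx
          · rw [hzx, swap_apply_left]
            exact Or.inr ⟨Or.inr ((MulAction.orbitRel _ D).refl y),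
              Or.inl ((MulAction.orbitRel _ D).refl x)⟩
          rcases eq_or_ne z y with hzy | hzy
          · rw [hzy, swap_apply_right]
            exact Or.inr ⟨Or.inl ((MulAction.orbitRel _ D).refl x),
              Or.inr ((MulAction.orbitRel _ D).refl y)⟩
          · rw [swap_apply_of_ne_of_ne hzx hzy]
            exact Or.inl ((MulAction.orbitRel _ D).refl z)
      rw [eulerChar] at hIH ⊢
      rw [hcomp'] at hIH
      rw [hcomp]
      omega
    · -- merge case
      have hsc' : (swap x y * facePerm a0 a1).SameCycle x y := merge_sc hxy hsc
      have hf : numCycles (facePerm a0 a1) ≤ numCycles (facePerm a0 a1') + 1 := by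
        have hττφ : swap x y * (swap x y * facePerm a0 a1) = facePerm a0 a1 := by
          rw [← mul_assoc, swap_mul_self, one_mul]
        calc numCycles (facePerm a0 a1)
            = numCycles (swap x y * (swap x y * facePerm a0 a1)) := by rw [hττφ]
          _ ≤ numCycles (swap x y * facePerm a0 a1) + 1 := merge_count hxy _
          _ = numCycles (facePerm a0 a1') + 1 := by rw [hφ']
      have hφ'G' : facePerm a0 a1' ∈ Subgroup.closure ({a0, a1'} : Set (Perm D)) := by
        rw [facePerm_mul]
        exact mul_mem (inv_mem ha1'G') (inv_mem ha0G')
      have hxyG' : MulAction.orbitRel (Subgroup.closure ({a0, a1'} : Set (Perm D))) D x y := by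
        obtain ⟨i, hi⟩ := hsc'
        rw [← hφ'] at hi
        exact (MulAction.orbitRel _ D).symm
          (orel_iff.mpr ⟨(facePerm a0 a1') ^ i, zpow_mem hφ'G' i, hi⟩)
      have hτG' : ∀ z, MulAction.orbitRel (Subgroup.closure ({a0, a1'} : Set (Perm D))) D
          (swap x y z) z := by
        intro z
        rcases eq_or_ne z x with hzx | hzx
        · rw [hzx, swap_apply_left]; exact (MulAction.orbitRel _ D).symm hxyG'
        rcases eq_or_ne z y with hzy | hzy
        · rw [hzy, swap_apply_right]; exact hxyG'
        · rw [swap_apply_of_ne_of_ne hzx hzy]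
      have hocH2 : oc (Subgroup.closure ({a0, a1, swap x y} : Set (Perm D)))
          = oc (Subgroup.closure ({a0, a1'} : Set (Perm D))) := by
        apply oc_closure_eq hG'H
        intro s hs z
        simp only [Set.mem_insert_iff, Set.mem_singleton_iff] at hs
        rcases hs with hs | hs | hs
        · rw [hs]; exact orel_of_mem ha0G' z
        · rw [hs]
          have haz : a1 z = a1' (swap x y z) := by
            rw [← ha1', Perm.mul_apply, swap_apply_self]
          rw [haz]
          exact (MulAction.orbitRel _ D).trans (orel_of_mem ha1'G' (swap x y z)) (hτG' z)
        · rw [hs]; exact hτG' z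
      have hc : oc (Subgroup.closure ({a0, a1'} : Set (Perm D)))
          = oc (Subgroup.closure ({a0, a1} : Set (Perm D))) := by rw [← hocH2, hocH]
      rw [eulerChar] at hIH ⊢
      rw [hcomp'] at hIH
      rw [hcomp]
      omega

end Aux2

/-- For any hypermap, 2·c ≥ χ. -/
theorem two_nc_ge_ec {D : Type*} [Fintype D] (a0 a1 : Perm D) :
    eulerChar D a0 a1 ≤ 2 * (numComponents a0 a1 : ℤ) := by
  classical
  exact main_aux a1.support.card a0 a1 le_rfl
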